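/- (Each arc is medium in at most O(log_k n) scaling phases.) Let k ≥ 2 and n ≥ 1 be integers, and define Q = ⌈log_k(4n)⌉, ε = k^{−Q}, and M = k^{2Q}. Let Δ : ℕ → ℝ be a sequence of positive reals with Δ(i+1) ≤ Δ(i)/k for every i. Then for every real c > 0, the number of indices i with ε⁵·Δ(i) ≤ c < 2M·Δ(i) is at most 7Q + 2. -/
import Mathlib


open Finset

/-- If the scaling parameter decreases by a factor of at least `k` each phase, then a
fixed bi-capacity `c` is "medium" (`ε⁵Δ ≤ c < 2MΔ`) in at most `7Q + 2` phases. -/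
theorem medium_arc_phase_count (k n Q : ℕ) (hk : 2 ≤ k) (hn : 1 ≤ n)
    (hQpos : 0 < Q) (hQ : 4 * n ≤ k ^ Q)
    (hQmin : ∀ Q' : ℕ, 0 < Q' → 4 * n ≤ k ^ Q' → Q ≤ Q')
    (Δ : ℕ → ℝ) (hΔpos : ∀ i, 0 < Δ i) (hΔ : ∀ i, Δ (i + 1) ≤ Δ i / k)
    (c : ℝ) (hc : 0 < c) :
    {i : ℕ | (((k : ℝ) ^ Q)⁻¹) ^ 5 * Δ i ≤ c ∧ c < 2 * (k : ℝ) ^ (2 * Q) * Δ i}.Finite ∧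
    {i : ℕ | (((k : ℝ) ^ Q)⁻¹) ^ 5 * Δ i ≤ c ∧ c < 2 * (k : ℝ) ^ (2 * Q) * Δ i}.ncard
      ≤ 7 * Q + 2 := by
  set S := {i : ℕ | (((k : ℝ) ^ Q)⁻¹) ^ 5 * Δ i ≤ c ∧ c < 2 * (k : ℝ) ^ (2 * Q) * Δ i}
    with hSdef
  have hk0 : (0:ℝ) < (k:ℝ) := by exact_mod_cast (by omega : 0 < k)
  have hk1 : (1:ℝ) ≤ (k:ℝ) := by exact_mod_cast (by omega : 1 ≤ k)
  have hk2 : (2:ℝ) ≤ (k:ℝ) := by exact_mod_cast hk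
  have hdecay : ∀ i d : ℕ, Δ (i + d) ≤ Δ i / (k:ℝ)^d := by
    intro i d
    induction d with
    | zero => simp
    | succ d ih =>
      calc Δ (i + (d+1)) = Δ ((i+d)+1) := by ring_nf
        _ ≤ Δ (i+d) / k := hΔ (i+d)
        _ ≤ (Δ i / (k:ℝ)^d) / k := by gcongr
        _ = Δ i / (k:ℝ)^(d+1) := by rw [div_div, ← pow_succ]
  rcases Set.eq_empty_or_nonempty S with hS | hS
  · simp [hS]
  · obtain ⟨i0, hi0, hmin⟩ := wellFounded_lt.has_min S hS
    have hsub : S ⊆ Set.Icc i0 (i0 + 7*Q) := by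
      intro j hj
      have hle : i0 ≤ j := not_lt.mp (hmin j hj)
      refine ⟨hle, ?_⟩
      set d := j - i0 with hd
      have hjd : j = i0 + d := by omega
      have h1 : (((k:ℝ)^Q)⁻¹)^5 * Δ i0 ≤ c := hi0.1
      have h2 : c < 2 * (k:ℝ)^(2*Q) * Δ j := hj.2
      have h3 : Δ j ≤ Δ i0 / (k:ℝ)^d := by rw [hjd]; exact hdecay i0 d
      have hD := hΔpos i0
      have hkd : (0:ℝ) < (k:ℝ)^d := by positivity
      have hA : (0:ℝ) < (k:ℝ)^(5*Q) := by positivity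
      have heps : (((k:ℝ)^Q)⁻¹)^5 = ((k:ℝ)^(5*Q))⁻¹ := by
        rw [inv_pow, ← pow_mul, mul_comm Q 5]
      have h4 : ((k:ℝ)^(5*Q))⁻¹ * Δ i0 < 2*(k:ℝ)^(2*Q) * (Δ i0 / (k:ℝ)^d) := by
        rw [← heps]
        refine h1.trans_lt (h2.trans_le ?_)
        gcongr
      have h5 : ((k:ℝ)^d * ((k:ℝ)^(5*Q))⁻¹) * Δ i0 < (2*(k:ℝ)^(2*Q)) * Δ i0 := by
        have h := mul_lt_mul_of_pos_left h4 hkd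
        calc ((k:ℝ)^d * ((k:ℝ)^(5*Q))⁻¹) * Δ i0
            = (k:ℝ)^d * (((k:ℝ)^(5*Q))⁻¹ * Δ i0) := by ring
          _ < (k:ℝ)^d * (2*(k:ℝ)^(2*Q) * (Δ i0 / (k:ℝ)^d)) := h
          _ = (2*(k:ℝ)^(2*Q)) * Δ i0 := by field_simp
      have h6 : (k:ℝ)^d * ((k:ℝ)^(5*Q))⁻¹ < 2*(k:ℝ)^(2*Q) :=
        lt_of_mul_lt_mul_right h5 hD.le
      have h7 : (k:ℝ)^d < 2*(k:ℝ)^(2*Q)*(k:ℝ)^(5*Q) := by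
        have h := mul_lt_mul_of_pos_right h6 hA
        simpa [mul_assoc, inv_mul_cancel₀ (ne_of_gt hA)] using h
      have h8 : (k:ℝ)^d < (k:ℝ)^(7*Q+1) := by
        have hle2 : 2*(k:ℝ)^(2*Q)*(k:ℝ)^(5*Q) ≤ (k:ℝ)^(7*Q+1) := by
          rw [mul_assoc, ← pow_add]
          calc 2*(k:ℝ)^(2*Q+5*Q) ≤ (k:ℝ)*(k:ℝ)^(2*Q+5*Q) := by
                gcongr
            _ = (k:ℝ)^(7*Q+1) := by rw [← pow_succ']; ring_nf
        linarith
      have hd' : d < 7*Q+1 := by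
        by_contra h
        push_neg at h
        have : (k:ℝ)^(7*Q+1) ≤ (k:ℝ)^d := pow_le_pow_right₀ hk1 h
        linarith
      omega
    have hfin : (Set.Icc i0 (i0+7*Q)).Finite := Set.finite_Icc _ _
    refine ⟨hfin.subset hsub, ?_⟩
    calc S.ncard ≤ (Set.Icc i0 (i0+7*Q)).ncard := Set.ncard_le_ncard hsub hfin
      _ ≤ 7*Q + 2 := by
        rw [← Finset.coe_Icc, Set.ncard_coe_finset, Nat.card_Icc]
        omega
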